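/- Let (X,d) be a non-separable metric space with nice closed balls (every closed ball that is a proper subset of X is compact). Then (ω₁ + 1)^{ω₁} embeds topologically into (CL(X), τ_{w(d)}). -/

import Mathlib

/-- The hyperspace of nonempty closed subsets of `X`. -/
def CL (X : Type*) [TopologicalSpace X] : Type _ := {A : Set X // A.Nonempty ∧ IsClosed A}

/-- The Wijsman topology on `CL X`: the weakest topology making `A ↦ d(x, A)`
continuous for every `x : X`. -/
noncomputable def WijsmanTopology (X : Type*) [MetricSpace X] : TopologicalSpace (CL X) :=
  ⨅ x : X, TopologicalSpace.induced (fun A : CL X => Metric.infDist x A.1) inferInstance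

open Metric Set
set_option linter.unusedSectionVars false

section Basics
variable {X : Type*} [MetricSpace X]

private lemma le_infDist'' {x : X} {s : Set X} (hs : s.Nonempty) {b : ℝ}
    (h : ∀ y ∈ s, b ≤ dist x y) : b ≤ Metric.infDist x s :=
  le_of_not_gt fun hlt => by
    obtain ⟨y, hy, hxy⟩ := (Metric.infDist_lt_iff hs).mp hlt
    exact absurd hxy (not_lt.mpr (h y hy))

private lemma sep_closed {ε : ℝ} (hε : 0 < ε) (B : Set X)
    (hB : ∀ a ∈ B, ∀ b ∈ B, a ≠ b → ε ≤ dist a b) : IsClosed B := by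
  apply isClosed_of_closure_subset
  intro y hy
  obtain ⟨b, hbB, hb⟩ := Metric.mem_closure_iff.mp hy (ε/2) (by linarith)
  by_cases hyb : y = b
  · rwa [hyb]
  · exfalso
    have hd : 0 < min (ε/2) (dist y b) := lt_min (by linarith) (dist_pos.mpr hyb)
    obtain ⟨b', hb'B, hb'⟩ := Metric.mem_closure_iff.mp hy _ hd
    have hbb' : b' ≠ b := by
      intro h
      rw [h] at hb'
      exact absurd (lt_of_lt_of_le hb' (min_le_right _ _)) (lt_irrefl _)
    have h1 := hB b hbB b' hb'B (Ne.symm hbb')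
    have h2 : dist b b' ≤ dist b y + dist y b' := dist_triangle b y b'
    have h3 : dist b y = dist y b := dist_comm b y
    have h4 : dist y b' < ε/2 := lt_of_lt_of_le hb' (min_le_left _ _)
    linarith

private lemma sep_finite_in_ball {ε : ℝ} (hε : 0 < ε)
    (hnice : ∀ (x : X) (r : ℝ), 0 ≤ r → Metric.closedBall x r ≠ Set.univ →
      IsCompact (Metric.closedBall x r))
    {J : Type*} {ι : J → X} (hsep : ∀ j j', j ≠ j' → ε ≤ dist (ι j) (ι j'))
    (x : X) (R : ℝ) (hR : Metric.closedBall x R ≠ Set.univ) :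
    {j | dist x (ι j) ≤ R}.Finite := by
  by_cases hR0 : 0 ≤ R
  · have hK : IsCompact (closedBall x R) := hnice x R hR0 hR
    obtain ⟨t, htf, hcov⟩ := (totallyBounded_iff).mp hK.totallyBounded (ε/2) (by linarith)
    have hsub : {j | dist x (ι j) ≤ R} ⊆ ⋃ y ∈ t, {j | ι j ∈ ball y (ε/2)} := by
      intro j hj
      have : ι j ∈ closedBall x R := by
        rw [mem_closedBall, dist_comm]; exact hj
      have := hcov this
      simpa using this
    refine Set.Finite.subset (Set.Finite.biUnion htf fun y _ => ?_) hsub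
    apply Set.Subsingleton.finite
    intro j hj j' hj'
    by_contra hne
    have h1 := hsep j j' hne
    have h2 : dist (ι j) y < ε/2 := by simpa [mem_ball] using hj
    have h3 : dist (ι j') y < ε/2 := by simpa [mem_ball] using hj'
    have h4 : dist (ι j) (ι j') ≤ dist (ι j) y + dist y (ι j') := dist_triangle _ _ _
    have h5 : dist y (ι j') = dist (ι j') y := dist_comm _ _
    linarith
  · push_neg at hR0
    have : {j | dist x (ι j) ≤ R} = ∅ := by
      ext j
      simp only [mem_setOf_eq, mem_empty_iff_false, iff_false, not_le]
      exact lt_of_lt_of_le hR0 dist_nonneg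
    rw [this]; exact finite_empty

end Basics
open Metric Set
set_option linter.unusedSectionVars false

section Core
variable {X : Type*} [MetricSpace X] {J : Type*}

private def auxIdx (g : J → Bool) : Set (Option J) :=
  insert none {j' | ∃ j, j' = some j ∧ g j = true}

private def auxA (ι : Option J → X) (g : J → Bool) : Set X := ι '' auxIdx g

private def auxT (ι : Option J → X) (x : X) (ρ : ℝ) (g : J → Bool) : Set (Option J) :=
  insert none {j' | ∃ j, j' = some j ∧ g j = true ∧ dist x (ι (some j)) ≤ ρ}

private lemma auxA_nonempty (ι : Option J → X) (g : J → Bool) : (auxA ι g).Nonempty :=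
  ⟨ι none, mem_image_of_mem ι (mem_insert _ _)⟩

private lemma mem_auxA (ι : Option J → X) (g : J → Bool) (x₀ : X) (h : x₀ = ι none) :
    x₀ ∈ auxA ι g := h ▸ mem_image_of_mem ι (mem_insert _ _)

variable {ε : ℝ} {ι : Option J → X}

private lemma auxA_pairwise (hsep : ∀ j j', j ≠ j' → ε ≤ dist (ι j) (ι j')) (g : J → Bool) :
    ∀ a ∈ auxA ι g, ∀ b ∈ auxA ι g, a ≠ b → ε ≤ dist a b := by
  rintro a ⟨j, _, rfl⟩ b ⟨j', _, rfl⟩ hne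
  exact hsep j j' (fun h => hne (by rw [h]))

private lemma auxA_closed (hε : 0 < ε) (hsep : ∀ j j', j ≠ j' → ε ≤ dist (ι j) (ι j'))
    (g : J → Bool) : IsClosed (auxA ι g) :=
  sep_closed hε _ (auxA_pairwise hsep g)

private lemma auxT_image_eq (x : X) (ρ : ℝ) (g : J → Bool) :
    ι '' auxT ι x ρ g = insert (ι none) (auxA ι g ∩ closedBall x ρ) := by
  ext y
  constructor
  · rintro ⟨j', hj', rfl⟩
    rcases mem_insert_iff.mp hj' with h | h
    · rw [h]; exact mem_insert _ _
    · obtain ⟨j, rfl, hg, hd⟩ := h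
      refine mem_insert_of_mem _ ⟨⟨some j, mem_insert_of_mem _ ⟨j, rfl, hg⟩, rfl⟩, ?_⟩
      rw [mem_closedBall, dist_comm]; exact hd
  · intro hy
    rcases mem_insert_iff.mp hy with h | h
    · exact ⟨none, mem_insert _ _, h.symm⟩
    · obtain ⟨⟨j', hj', rfl⟩, hball⟩ := h
      rcases mem_insert_iff.mp hj' with h' | h'
      · exact ⟨none, mem_insert _ _, by rw [h']⟩
      · obtain ⟨j, rfl, hg⟩ := h'
        refine ⟨some j, mem_insert_of_mem _ ⟨j, rfl, hg, ?_⟩, rfl⟩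
        rw [mem_closedBall, dist_comm] at hball; exact hball

private lemma auxT_congr (x : X) (ρ : ℝ) {g₁ g₂ : J → Bool}
    (h : ∀ j ∈ {j : J | dist x (ι (some j)) ≤ ρ}, g₁ j = g₂ j) :
    auxT ι x ρ g₁ = auxT ι x ρ g₂ := by
  unfold auxT
  ext j'
  simp only [mem_insert_iff, mem_setOf_eq]
  constructor
  · rintro (h' | ⟨j, rfl, hg, hd⟩)
    · exact Or.inl h'
    · exact Or.inr ⟨j, rfl, (h j hd) ▸ hg, hd⟩
  · rintro (h' | ⟨j, rfl, hg, hd⟩)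
    · exact Or.inl h'
    · exact Or.inr ⟨j, rfl, (h j hd) ▸ hg, hd⟩

private lemma auxT_image_subset (x : X) (ρ : ℝ) (g : J → Bool) :
    ι '' auxT ι x ρ g ⊆ auxA ι g := by
  rintro y ⟨j', hj', rfl⟩
  rcases mem_insert_iff.mp hj' with h | h
  · rw [h]; exact mem_image_of_mem ι (mem_insert _ _)
  · obtain ⟨j, rfl, hg, _⟩ := h
    exact mem_image_of_mem ι (mem_insert_of_mem _ ⟨j, rfl, hg⟩)

private lemma auxT_image_nonempty (x : X) (ρ : ℝ) (g : J → Bool) :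
    (ι '' auxT ι x ρ g).Nonempty := ⟨ι none, mem_image_of_mem ι (mem_insert _ _)⟩

end Core
section Approx
open Metric Set
set_option linter.unusedSectionVars false
variable {X : Type*} [MetricSpace X] {J : Type*} {ε : ℝ} {ι : Option J → X}

private lemma aux_approx (hε : 0 < ε)
    (hnice : ∀ (x : X) (r : ℝ), 0 ≤ r → Metric.closedBall x r ≠ Set.univ →
      IsCompact (Metric.closedBall x r))
    (hsep : ∀ j j', j ≠ j' → ε ≤ dist (ι j) (ι j'))
    (x : X) (δ : ℝ) (hδ : 0 < δ) :
    ∃ F : Set J, F.Finite ∧ ∀ g₁ g₂ : J → Bool, (∀ j ∈ F, g₁ j = g₂ j) →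
      dist (Metric.infDist x (auxA ι g₁)) (Metric.infDist x (auxA ι g₂)) ≤ 2*δ := by
  have hFin : ∀ ρ : ℝ, Metric.closedBall x ρ ≠ Set.univ →
      {j : J | dist x (ι (some j)) ≤ ρ}.Finite := by
    intro ρ hρ
    have h := sep_finite_in_ball hε hnice hsep x ρ hρ
    have : {j : J | dist x (ι (some j)) ≤ ρ} = some ⁻¹' {j' | dist x (ι j') ≤ ρ} := rfl
    rw [this]
    exact Set.Finite.preimage (Set.injOn_of_injective (Option.some_injective _)) h
  by_cases hP : ∃ ρ, Metric.closedBall x ρ = Set.univ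
  · set P := {ρ : ℝ | Metric.closedBall x ρ = Set.univ} with hPdef
    have hPne : P.Nonempty := hP
    have hbdd : BddBelow P := by
      refine ⟨0, fun ρ hρ => ?_⟩
      have : x ∈ Metric.closedBall x ρ := by rw [hρ]; trivial
      simpa using this
    set r' := sInf P with hr'
    have hall : ∀ y : X, dist x y ≤ r' := by
      intro y
      apply le_csInf hPne
      intro ρ hρ
      have : y ∈ Metric.closedBall x ρ := by rw [hρ]; trivial
      rwa [mem_closedBall, dist_comm] at this
    set ρ := r' - δ with hρdef
    have hne_univ : Metric.closedBall x ρ ≠ Set.univ := by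
      intro h
      have : r' ≤ ρ := csInf_le hbdd h
      rw [hρdef] at this; linarith
    refine ⟨{j : J | dist x (ι (some j)) ≤ ρ}, hFin ρ hne_univ, ?_⟩
    intro g₁ g₂ hagree
    have htset : auxT ι x ρ g₁ = auxT ι x ρ g₂ := auxT_congr x ρ hagree
    have hbound : ∀ g : J → Bool,
        Metric.infDist x (auxA ι g) ≤ Metric.infDist x (ι '' auxT ι x ρ g) ∧
        Metric.infDist x (ι '' auxT ι x ρ g) ≤ Metric.infDist x (auxA ι g) + δ := by
      intro g
      constructor
      · exact Metric.infDist_le_infDist_of_subset (auxT_image_subset x ρ g)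
          (auxT_image_nonempty x ρ g)
      · have h1 : ∀ y ∈ auxA ι g,
            Metric.infDist x (ι '' auxT ι x ρ g) - δ ≤ dist x y := by
          intro y hy
          by_cases hyb : dist x y ≤ ρ
          · have hmem : y ∈ ι '' auxT ι x ρ g := by
              rw [auxT_image_eq]
              exact mem_insert_of_mem _ ⟨hy, by rwa [mem_closedBall, dist_comm]⟩
            have := Metric.infDist_le_dist_of_mem (x := x) hmem
            linarith
          · push_neg at hyb
            have hm : Metric.infDist x (ι '' auxT ι x ρ g) ≤ dist x (ι none) :=
              Metric.infDist_le_dist_of_mem ⟨none, mem_insert _ _, rfl⟩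
            have h2 := hall (ι none)
            rw [hρdef] at hyb
            linarith
        have := le_infDist'' (auxA_nonempty ι g) h1
        linarith
    obtain ⟨h1a, h1b⟩ := hbound g₁
    obtain ⟨h2a, h2b⟩ := hbound g₂
    rw [htset] at h1a h1b
    rw [Real.dist_eq, abs_le]
    constructor <;> linarith
  · push_neg at hP
    set ρ := dist x (ι none) with hρdef
    refine ⟨{j : J | dist x (ι (some j)) ≤ ρ}, hFin ρ (hP ρ), ?_⟩
    intro g₁ g₂ hagree
    have htset : auxT ι x ρ g₁ = auxT ι x ρ g₂ := auxT_congr x ρ hagree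
    have hexact : ∀ g : J → Bool,
        Metric.infDist x (auxA ι g) = Metric.infDist x (ι '' auxT ι x ρ g) := by
      intro g
      apply le_antisymm
      · exact Metric.infDist_le_infDist_of_subset (auxT_image_subset x ρ g)
          (auxT_image_nonempty x ρ g)
      · apply le_infDist'' (auxA_nonempty ι g)
        intro y hy
        by_cases hyb : dist x y ≤ ρ
        · apply Metric.infDist_le_dist_of_mem
          rw [auxT_image_eq]
          exact mem_insert_of_mem _ ⟨hy, by rwa [mem_closedBall, dist_comm]⟩
        · push_neg at hyb
          have hm : Metric.infDist x (ι '' auxT ι x ρ g) ≤ dist x (ι none) :=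
            Metric.infDist_le_dist_of_mem ⟨none, mem_insert _ _, rfl⟩
          rw [hρdef] at hyb
          linarith
    rw [hexact g₁, hexact g₂, htset, dist_self]
    linarith

private lemma aux_cont (hε : 0 < ε)
    (hnice : ∀ (x : X) (r : ℝ), 0 ≤ r → Metric.closedBall x r ≠ Set.univ →
      IsCompact (Metric.closedBall x r))
    (hsep : ∀ j j', j ≠ j' → ε ≤ dist (ι j) (ι j')) (x : X) :
    Continuous (fun g : J → Bool => Metric.infDist x (auxA ι g)) := by
  rw [continuous_iff_continuousAt]
  intro g₀
  rw [ContinuousAt, Metric.tendsto_nhds]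
  intro η hη
  obtain ⟨F, hF, hFb⟩ := aux_approx hε hnice hsep x (η/3) (by linarith)
  have hU : {g : J → Bool | ∀ j ∈ F, g j = g₀ j} ∈ nhds g₀ := by
    have heq : {g : J → Bool | ∀ j ∈ F, g j = g₀ j} = ⋂ j ∈ F, {g | g j = g₀ j} := by
      ext g; simp
    rw [heq]
    rw [Filter.biInter_mem hF]
    intro j _
    have hopen : IsOpen {g : J → Bool | g j = g₀ j} := by
      have : {g : J → Bool | g j = g₀ j} = (fun g : J → Bool => g j) ⁻¹' {g₀ j} := by
        ext g; simp
      rw [this]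
      exact (isOpen_discrete _).preimage (continuous_apply j)
    exact hopen.mem_nhds rfl
  filter_upwards [hU] with g hg
  calc dist (Metric.infDist x (auxA ι g)) (Metric.infDist x (auxA ι g₀))
      ≤ 2*(η/3) := hFb g g₀ hg
    _ < η := by linarith

private lemma auxA_inj (hι : Function.Injective ι) {g₁ g₂ : J → Bool}
    (h : auxA ι g₁ = auxA ι g₂) : g₁ = g₂ := by
  funext j
  have key : ∀ ga gb : J → Bool, auxA ι ga = auxA ι gb → ga j = true → gb j = true := by
    intro ga gb hab hj
    have : ι (some j) ∈ auxA ι ga :=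
      mem_image_of_mem ι (mem_insert_of_mem _ ⟨j, rfl, hj⟩)
    rw [hab] at this
    obtain ⟨j', hj', heq⟩ := this
    have hjj : j' = some j := hι heq
    rw [hjj] at hj'
    rcases mem_insert_iff.mp hj' with h' | h'
    · exact absurd h' (by simp)
    · obtain ⟨j'', hj'', hg⟩ := h'
      rw [Option.some_inj] at hj''
      rwa [hj'']
  cases hj1 : g₁ j with
  | true => rw [key g₁ g₂ h hj1]
  | false =>
    cases hj2 : g₂ j with
    | true =>
      have := key g₂ g₁ h.symm hj2
      rw [this] at hj1
      exact absurd hj1 (by simp)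
    | false => rfl

end Approx
section OrdPart
open Set

private lemma contCoord (o : Ordinal) (α : Set.Iio o) :
    Continuous (fun b : Set.Iic o => decide ((α : Ordinal) < (b : Ordinal))) := by
  classical
  have hopen1 : IsOpen {b : Set.Iic o | (α : Ordinal) < (b : Ordinal)} := by
    have h : {b : Set.Iic o | (α : Ordinal) < (b : Ordinal)} =
        Set.Ioi (⟨(α : Ordinal), Set.mem_Iic.mpr (le_of_lt α.2)⟩ : Set.Iic o) := by
      ext b; simp [Set.mem_Ioi, ← Subtype.coe_lt_coe]
    rw [h]; exact isOpen_Ioi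
  have hopen2 : IsOpen {b : Set.Iic o | ¬ (α : Ordinal) < (b : Ordinal)} := by
    have hsucc : Order.succ (α : Ordinal) ∈ Set.Iic o := Set.mem_Iic.mpr (Order.succ_le_of_lt α.2)
    have h : {b : Set.Iic o | ¬ (α : Ordinal) < (b : Ordinal)} =
        Set.Iio (⟨Order.succ (α : Ordinal), hsucc⟩ : Set.Iic o) := by
      ext b
      simp only [Set.mem_setOf_eq, not_lt, Set.mem_Iio, ← Subtype.coe_lt_coe]
      exact (Order.lt_succ_iff).symm
    rw [h]; exact isOpen_Iio
  rw [continuous_def]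
  intro s _
  have hset : (fun b : Set.Iic o => decide ((α : Ordinal) < (b : Ordinal))) ⁻¹' s =
      (if true ∈ s then {b : Set.Iic o | (α : Ordinal) < (b : Ordinal)} else ∅) ∪
      (if false ∈ s then {b : Set.Iic o | ¬ (α : Ordinal) < (b : Ordinal)} else ∅) := by
    ext b
    rcases le_or_gt (b : Ordinal) (α : Ordinal) with hb | hb
    · by_cases ht : true ∈ s <;> by_cases hf : false ∈ s <;>
        simp [Set.mem_preimage, ht, hf, hb, not_lt.mpr hb]
    · by_cases ht : true ∈ s <;> by_cases hf : false ∈ s <;>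
        simp [Set.mem_preimage, ht, hf, hb, hb.not_ge]
  rw [hset]
  refine IsOpen.union ?_ ?_
  · split_ifs
    · exact hopen1
    · exact isOpen_empty
  · split_ifs
    · exact hopen2
    · exact isOpen_empty

private lemma injCoord (o : Ordinal) {b₁ b₂ : Set.Iic o}
    (h : ∀ α : Set.Iio o,
      decide ((α : Ordinal) < (b₁ : Ordinal)) = decide ((α : Ordinal) < (b₂ : Ordinal))) :
    b₁ = b₂ := by
  rcases lt_trichotomy (b₁ : Ordinal) (b₂ : Ordinal) with hlt | heq | hgt
  · exfalso
    have := h ⟨(b₁ : Ordinal), lt_of_lt_of_le hlt b₂.2⟩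
    simp [hlt, lt_irrefl] at this
  · exact Subtype.ext heq
  · exfalso
    have := h ⟨(b₂ : Ordinal), lt_of_lt_of_le hgt b₁.2⟩
    simp [hgt, lt_irrefl] at this

private lemma iic_compact (o : Ordinal) : CompactSpace (Set.Iic o) := by
  rw [← isCompact_iff_compactSpace]
  have h : Set.Iic o = Set.Icc 0 o := by
    ext x; simp
  rw [h]
  exact isCompact_Icc

end OrdPart

section Wij
open Metric

private lemma wijsman_eq_induced (X : Type*) [MetricSpace X] :
    WijsmanTopology X = TopologicalSpace.induced
      (fun A : CL X => (fun x => Metric.infDist x A.1 : X → ℝ)) Pi.topologicalSpace := by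
  unfold WijsmanTopology
  have h : ∀ x : X, TopologicalSpace.induced (fun A : CL X => Metric.infDist x A.1)
      inferInstance
      = TopologicalSpace.induced (fun A : CL X => (fun y => Metric.infDist y A.1 : X → ℝ))
        (TopologicalSpace.induced (fun p : X → ℝ => p x) inferInstance) := fun x =>
    (induced_compose (g := fun p : X → ℝ => p x)
      (f := fun A : CL X => (fun y => Metric.infDist y A.1 : X → ℝ))).symm
  simp only [h]
  rw [← induced_iInf]
  rfl

private lemma phi_injective (X : Type*) [MetricSpace X] :
    Function.Injective (fun A : CL X => (fun x => Metric.infDist x A.1 : X → ℝ)) := by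
  intro A B h
  apply Subtype.ext
  ext y
  have h1 : Metric.infDist y A.1 = Metric.infDist y B.1 := congrFun h y
  constructor
  · intro hy
    exact (B.2.2.mem_iff_infDist_zero B.2.1).mpr
      (h1 ▸ (A.2.2.mem_iff_infDist_zero A.2.1).mp hy)
  · intro hy
    exact (A.2.2.mem_iff_infDist_zero A.2.1).mpr
      (h1 ▸ (B.2.2.mem_iff_infDist_zero B.2.1).mp hy)

private lemma wijsman_t2 (X : Type*) [MetricSpace X] :
    @T2Space (CL X) (WijsmanTopology X) := by
  letI := WijsmanTopology X
  have hemb : Topology.IsEmbedding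
      (fun A : CL X => (fun x => Metric.infDist x A.1 : X → ℝ)) :=
    ⟨⟨wijsman_eq_induced X⟩, phi_injective X⟩
  exact hemb.t2Space

private lemma phi_cont {X : Type*} [MetricSpace X] {J : Type*} {ε : ℝ} {ι : Option J → X}
    (hε : 0 < ε)
    (hnice : ∀ (x : X) (r : ℝ), 0 ≤ r → Metric.closedBall x r ≠ Set.univ →
      IsCompact (Metric.closedBall x r))
    (hsep : ∀ j j', j ≠ j' → ε ≤ dist (ι j) (ι j')) :
    @Continuous (J → Bool) (CL X) _ (WijsmanTopology X)
      (fun g => ⟨auxA ι g, auxA_nonempty ι g, auxA_closed hε hsep g⟩) := by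
  unfold WijsmanTopology
  apply continuous_iInf_rng.mpr
  intro x
  apply continuous_induced_rng.mpr
  exact aux_cont hε hnice hsep x

end Wij

private lemma exists_sep {X : Type*} [MetricSpace X]
    (hsep : ¬ TopologicalSpace.SeparableSpace X) :
    ∃ ε : ℝ, 0 < ε ∧ ∃ S : Set X,
      (∀ a ∈ S, ∀ b ∈ S, a ≠ b → ε ≤ dist a b) ∧ ¬ S.Countable := by
  by_contra h
  push_neg at h
  apply hsep
  have key : ∀ n : ℕ, ∃ S : Set X,
      Maximal (fun S => ∀ a ∈ S, ∀ b ∈ S, a ≠ b → 1/((n:ℝ)+1) ≤ dist a b) S := by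
    intro n
    apply zorn_subset
    intro c hc hchain
    refine ⟨⋃₀ c, ?_, fun s hs => subset_sUnion_of_mem hs⟩
    intro a ha b hb hne
    obtain ⟨s, hs, has⟩ := ha
    obtain ⟨s', hs', hbs'⟩ := hb
    rcases hchain.total hs hs' with hss | hss
    · exact hc hs' a (hss has) b hbs' hne
    · exact hc hs a has b (hss hbs') hne
  choose S hS using key
  have hcnt : ∀ n, (S n).Countable := fun n =>
    h _ (by positivity) _ ((hS n).1)
  refine ⟨⟨⋃ n, S n, Set.countable_iUnion hcnt, ?_⟩⟩
  rw [Metric.dense_iff]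
  intro x r hr
  obtain ⟨n, hn⟩ := exists_nat_one_div_lt hr
  by_cases hx : x ∈ S n
  · exact ⟨x, mem_ball_self hr, mem_iUnion.mpr ⟨n, hx⟩⟩
  · by_contra hno
    rw [Set.not_nonempty_iff_eq_empty] at hno
    apply hx
    have hfar : ∀ y ∈ S n, 1/((n:ℝ)+1) ≤ dist x y := by
      intro y hy
      by_contra hlt
      push_neg at hlt
      have hmem : y ∈ ball x r ∩ ⋃ m, S m := by
        refine ⟨?_, mem_iUnion.mpr ⟨n, hy⟩⟩
        rw [mem_ball, dist_comm]
        exact lt_trans hlt hn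
      rw [hno] at hmem
      exact hmem
    have hins : ∀ a ∈ insert x (S n), ∀ b ∈ insert x (S n), a ≠ b →
        1/((n:ℝ)+1) ≤ dist a b := by
      intro a ha b hb hne
      rcases mem_insert_iff.mp ha with ha | ha
      · rcases mem_insert_iff.mp hb with hb | hb
        · exact absurd (ha.trans hb.symm) hne
        · rw [ha]; exact hfar b hb
      · rcases mem_insert_iff.mp hb with hb | hb
        · rw [hb, dist_comm]; exact hfar a ha
        · exact (hS n).1 a ha b hb hne
    exact (hS n).2 hins (subset_insert _ _) (mem_insert _ _)

/-- If `(X,d)` is non-separable with nice closed balls, then `(ω₁ + 1)^{ω₁}` embeds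
into `(CL X, τ_{w(d)})`. -/
theorem stmt_13 {X : Type*} [MetricSpace X]
    (hsep : ¬ TopologicalSpace.SeparableSpace X)
    (hnice : ∀ (x : X) (r : ℝ), 0 ≤ r → Metric.closedBall x r ≠ Set.univ →
      IsCompact (Metric.closedBall x r)) :
    ∃ f : (Quotient.out (Cardinal.aleph 1) → Set.Iic (Cardinal.aleph 1).ord) → CL X,
      @Topology.IsEmbedding _ _ _ (WijsmanTopology X) f := by
  classical
  obtain ⟨ε, hε, S, hSsep, hSc⟩ := exists_sep hsep
  have hcard : Nonempty (Option (Quotient.out (Cardinal.aleph 1) ×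
      (Set.Iio (Cardinal.aleph 1).ord)) ↪ S) := by
    rw [← Cardinal.lift_mk_le']
    have h1 : Cardinal.mk (Option (Quotient.out (Cardinal.aleph 1) ×
        (Set.Iio (Cardinal.aleph 1).ord))) = Cardinal.aleph 1 := by
      rw [Cardinal.mk_option, Cardinal.mk_prod, Cardinal.mk_out,
        Ordinal.mk_Iio_ordinal, Cardinal.card_ord]
      simp only [Cardinal.lift_aleph, Ordinal.lift_one]
      rw [Cardinal.mul_eq_self (Cardinal.aleph0_le_aleph 1),
        Cardinal.add_one_eq (Cardinal.aleph0_le_aleph 1)]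
    have h2 : Cardinal.aleph 1 ≤ Cardinal.mk S := not_lt.mp
      (fun hlt => hSc ((Cardinal.countable_iff_lt_aleph_one S).mpr hlt))
    rw [h1]
    calc Cardinal.lift (Cardinal.aleph 1) = Cardinal.aleph 1 := by
          simp [Cardinal.lift_aleph]
      _ = Cardinal.lift (Cardinal.aleph 1) := by simp [Cardinal.lift_aleph]
      _ ≤ Cardinal.lift (Cardinal.mk S) := Cardinal.lift_le.mpr h2
  obtain ⟨ι0⟩ := hcard
  set J := Quotient.out (Cardinal.aleph 1) × (Set.Iio (Cardinal.aleph 1).ord) with hJ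
  let ι : Option J → X := fun j => ((ι0 j : S) : X)
  have hιinj : Function.Injective ι := fun a b h => ι0.injective (Subtype.ext h)
  have hsepι : ∀ j j', j ≠ j' → ε ≤ dist (ι j) (ι j') := fun j j' hne =>
    hSsep _ (ι0 j).2 _ (ι0 j').2 (fun h => hne (ι0.injective (Subtype.ext h)))
  letI tW : TopologicalSpace (CL X) := WijsmanTopology X
  haveI hT2 : T2Space (CL X) := wijsman_t2 X
  haveI hCpt : CompactSpace (Set.Iic (Cardinal.aleph 1).ord) := iic_compact _
  let e1 : (Quotient.out (Cardinal.aleph 1) → Set.Iic (Cardinal.aleph 1).ord) →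
      (J → Bool) :=
    fun f p => decide ((p.2 : Ordinal) < (f p.1 : Ordinal))
  let φ : (J → Bool) → CL X := fun g => ⟨auxA ι g, auxA_nonempty ι g, auxA_closed hε hsepι g⟩
  refine ⟨φ ∘ e1, ?_⟩
  have hφcont : Continuous φ := phi_cont hε hnice hsepι
  have he1cont : Continuous e1 :=
    continuous_pi fun p => (contCoord _ p.2).comp (continuous_apply p.1)
  have hφinj : Function.Injective φ := fun g₁ g₂ h =>
    auxA_inj hιinj (congrArg Subtype.val h)
  have he1inj : Function.Injective e1 := by
    intro f₁ f₂ h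
    funext k
    exact injCoord _ (fun α => congrFun h (k, α))
  have hcont : Continuous (φ ∘ e1) := hφcont.comp he1cont
  have hinj : Function.Injective (φ ∘ e1) := hφinj.comp he1inj
  exact (hcont.isClosedEmbedding hinj).toIsEmbedding
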